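/- Let H be a parity check matrix of a linear [n,k] code C over F_q. Then C is an LCD code (i.e., C ∩ C⊥ = {0}) if and only if the (n-k)×(n-k) matrix H·Hᵀ is nonsingular. -/

import Mathlib

def dualCode {F : Type*} [Field F] {ι : Type*} [Fintype ι]
    (C : Submodule F (ι → F)) : Submodule F (ι → F) where
  carrier := {v | ∀ w ∈ C, ∑ i, v i * w i = 0}
  add_mem' := by
    intro a b ha hb w hw
    simp only [Set.mem_setOf_eq] at *
    simp [Pi.add_apply, add_mul, Finset.sum_add_distrib, ha w hw, hb w hw]
  zero_mem' := by intro w hw; simp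
  smul_mem' := by
    intro c a ha w hw
    simp only [Set.mem_setOf_eq] at *
    simp [Pi.smul_apply, smul_eq_mul, mul_assoc, ← Finset.mul_sum, ha w hw]

/-- Massey's criterion: if `H` is a parity check matrix of an `[n,k]` code `C` over `F_q`,
then `C` is LCD (i.e. `C ⊓ C⊥ = ⊥`) iff the `(n-k) × (n-k)` matrix `H * Hᵀ` is nonsingular. -/
theorem stmt5 {F : Type*} [Field F] [Fintype F] {n k : ℕ} (hkn : k ≤ n)
    (C : Submodule F (Fin n → F)) (hC : Module.finrank F C = k)
    (H : Matrix (Fin (n - k)) (Fin n) F)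
    (hind : LinearIndependent F (fun i => H i))
    (hspan : Submodule.span F (Set.range (fun i => H i)) = dualCode C) :
    C ⊓ dualCode C = ⊥ ↔ IsUnit (H * H.transpose) := by
  classical
  -- every row of H is in the dual code
  have hrowdual : ∀ i, H i ∈ dualCode C := fun i =>
    hspan ▸ Submodule.subset_span ⟨i, rfl⟩
  -- C is contained in the kernel of mulVecLin H
  have hCker : C ≤ LinearMap.ker H.mulVecLin := by
    intro v hv
    simp only [LinearMap.mem_ker]
    ext i
    have := hrowdual i v hv
    simpa [Matrix.mulVecLin_apply, Matrix.mulVec, dotProduct] using this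
  -- rank of H is n - k
  have hrank : H.rank = n - k := by
    rw [← Matrix.rank_transpose, Matrix.rank, Matrix.range_mulVecLin,
      Matrix.col_transpose, show H.row = fun i => H i from rfl]
    rw [finrank_span_eq_card hind]
    simp
  -- kernel of mulVecLin H has finrank k
  have hkerrank : Module.finrank F (LinearMap.ker H.mulVecLin) = k := by
    have h1 := LinearMap.finrank_range_add_finrank_ker H.mulVecLin
    rw [Module.finrank_pi] at h1
    have h2 : Module.finrank F (LinearMap.range H.mulVecLin) = n - k := hrank
    simp only [Fintype.card_fin] at h1
    omega
  -- hence C equals the kernel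
  have hCeq : C = LinearMap.ker H.mulVecLin :=
    Submodule.eq_of_le_of_finrank_eq hCker (by rw [hC, hkerrank])
  have hmemC : ∀ v, v ∈ C ↔ H.mulVec v = 0 := by
    intro v; rw [hCeq]; simp [Matrix.mulVecLin_apply]
  have hmemD : ∀ v, v ∈ dualCode C ↔ ∃ x, Matrix.vecMul x H = v := by
    intro v
    rw [← hspan]
    constructor
    · intro hv
      obtain ⟨c, hc⟩ := (Submodule.mem_span_range_iff_exists_fun F).1 hv
      refine ⟨c, ?_⟩
      rw [← hc]
      ext j
      simp [Matrix.vecMul, dotProduct, Finset.sum_apply]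
    · rintro ⟨x, rfl⟩
      apply (Submodule.mem_span_range_iff_exists_fun F).2
      refine ⟨x, ?_⟩
      ext j
      simp [Matrix.vecMul, dotProduct, Finset.sum_apply]
  have hkey : ∀ x, H.mulVec (Matrix.vecMul x H) = (H * H.transpose).mulVec x := by
    intro x
    rw [← Matrix.mulVec_mulVec, Matrix.mulVec_transpose]
  constructor
  · intro hinf
    rw [Matrix.isUnit_iff_isUnit_det, isUnit_iff_ne_zero]
    intro hdet
    obtain ⟨x, hx0, hxz⟩ := Matrix.exists_mulVec_eq_zero_iff.2 hdet
    have hv : Matrix.vecMul x H ∈ C ⊓ dualCode C := by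
      refine ⟨(hmemC _).2 ?_, (hmemD _).2 ⟨x, rfl⟩⟩
      rw [hkey, hxz]
    rw [hinf] at hv
    apply hx0
    have : ∑ i, x i • H i = 0 := by
      have hv' : Matrix.vecMul x H = 0 := hv
      rw [← hv']
      ext j
      simp [Matrix.vecMul, dotProduct, Finset.sum_apply]
    exact (Fintype.linearIndependent_iff.1 hind x this) |> funext
  · intro hunit
    rw [eq_bot_iff]
    rintro v ⟨hvC, hvD⟩
    obtain ⟨x, rfl⟩ := (hmemD v).1 hvD
    have h0 : (H * H.transpose).mulVec x = 0 := by
      rw [← hkey]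
      exact (hmemC _).1 hvC
    have hx : x = 0 := by
      have : Invertible (H * H.transpose) := hunit.invertible
      have hinj := Matrix.mulVec_injective_of_invertible (H * H.transpose)
      have := hinj (a₁ := x) (a₂ := 0) (by rw [h0, Matrix.mulVec_zero])
      exact this
    simp [hx]
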